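/- arXiv:2605.17670 — 7 statements merged into one kernel-verified Lean document; each statement's English description precedes it below -/
import Mathlib

section
/- Let R be an integral domain over a field k of characteristic zero and δ a locally nilpotent derivation of R. Then the kernel of δ is factorially closed: if f, g ∈ R are nonzero and fg ∈ ker δ, then f ∈ ker δ and g ∈ ker δ. -/
/-- A locally nilpotent derivation: every element is annihilated by some iterate. -/
def IsLND {k R : Type*} [CommRing k] [CommRing R] [Algebra k R]
    (δ : Derivation k R R) : Prop :=
  ∀ g : R, ∃ n : ℕ, ((δ.toLinearMap : Module.End k R) ^ n) g = 0

/-- Iterated Leibniz rule. -/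
lemma iter_leibniz {k R : Type*} [CommRing k] [CommRing R] [Algebra k R]
    (δ : Derivation k R R) (f g : R) (n : ℕ) :
    ((δ.toLinearMap : Module.End k R) ^ n) (f * g) =
      ∑ i ∈ Finset.range (n + 1),
        (n.choose i : R) * (((δ.toLinearMap : Module.End k R) ^ i) f *
          ((δ.toLinearMap : Module.End k R) ^ (n - i)) g) := by
  set D : Module.End k R := (δ.toLinearMap : Module.End k R) with hDdef
  have hD : ∀ a b : R, D (a * b) = D a * b + a * D b := by
    intro a b
    show δ (a * b) = δ a * b + a * δ b
    rw [δ.leibniz, smul_eq_mul, smul_eq_mul]; ring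
  induction n with
  | zero => simp
  | succ n ih =>
    rw [pow_succ', Module.End.mul_apply, ih, map_sum]
    have step : ∀ i ∈ Finset.range (n + 1),
        D ((n.choose i : R) * ((D ^ i) f * (D ^ (n - i)) g)) =
        (n.choose i : R) * ((D ^ (i+1)) f * (D ^ (n - i)) g)
          + (n.choose i : R) * ((D ^ i) f * (D ^ (n - i + 1)) g) := by
      intro i _
      have h1 : D ((n.choose i : R) * ((D ^ i) f * (D ^ (n-i)) g)) =
          (n.choose i : R) * D ((D ^ i) f * (D ^ (n-i)) g) := by
        have : ((n.choose i : R) * ((D ^ i) f * (D ^ (n-i)) g)) =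
            (n.choose i : ℕ) • ((D ^ i) f * (D ^ (n-i)) g) := by
          simp [nsmul_eq_mul]
        rw [this, map_nsmul, nsmul_eq_mul]
      rw [h1, hD, pow_succ', pow_succ', Module.End.mul_apply, Module.End.mul_apply]
      ring
    rw [Finset.sum_congr rfl step, Finset.sum_add_distrib]
    -- second sum: reindex nothing; note n - i + 1 = n + 1 - i for i ≤ n
    have e2 : ∑ i ∈ Finset.range (n + 1),
        (n.choose i : R) * ((D ^ i) f * (D ^ (n - i + 1)) g)
        = ∑ i ∈ Finset.range (n + 1),
        (n.choose i : R) * ((D ^ i) f * (D ^ (n + 1 - i)) g) := by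
      refine Finset.sum_congr rfl fun i hi => ?_
      rw [Finset.mem_range] at hi
      rw [Nat.sub_add_comm (by omega)]
    rw [e2]
    -- RHS: split off the i = 0 term and use Pascal
    rw [Finset.sum_range_succ' _ (n + 1)]
    have e3 : ∀ i ∈ Finset.range (n + 1),
        ((n+1).choose (i+1) : R) * ((D ^ (i+1)) f * (D ^ (n + 1 - (i+1))) g)
        = (n.choose i : R) * ((D ^ (i+1)) f * (D ^ (n - i)) g)
          + (n.choose (i+1) : R) * ((D ^ (i+1)) f * (D ^ (n - i)) g) := by
      intro i hi
      have : (n+1).choose (i+1) = n.choose i + n.choose (i+1) := by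
        rw [Nat.choose_succ_succ]
      rw [this, Nat.cast_add, Nat.succ_sub_succ]
      ring
    rw [Finset.sum_congr rfl e3, Finset.sum_add_distrib]
    -- Also split the second LHS sum with sum_range_succ'
    rw [Finset.sum_range_succ' (fun i => (n.choose i : R) * ((D ^ i) f * (D ^ (n + 1 - i)) g)) n]
    have e4 : ∑ i ∈ Finset.range n,
        (n.choose (i+1) : R) * ((D ^ (i+1)) f * (D ^ (n + 1 - (i+1))) g)
        = ∑ i ∈ Finset.range (n+1),
        (n.choose (i+1) : R) * ((D ^ (i+1)) f * (D ^ (n - i)) g) := by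
      rw [Finset.sum_range_succ]
      simp [Nat.succ_sub_succ]
    rw [e4]
    simp only [Nat.choose_zero_right, Nat.cast_one, pow_zero, Module.End.one_apply,
      Nat.sub_zero, one_mul]
    ring

/-- The kernel of a locally nilpotent derivation of a domain over a field of
characteristic zero is factorially closed. -/
theorem stmt1 {k R : Type*} [Field k] [CharZero k] [CommRing R] [IsDomain R] [Algebra k R]
    (δ : Derivation k R R) (hδ : IsLND δ)
    (f g : R) (hf : f ≠ 0) (hg : g ≠ 0) (h : δ (f * g) = 0) :
    δ f = 0 ∧ δ g = 0 := by
  set D : Module.End k R := (δ.toLinearMap : Module.End k R) with hDdef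
  -- maximal nonvanishing degree
  have exm : ∀ x : R, x ≠ 0 → ∃ m : ℕ, (D ^ m) x ≠ 0 ∧ (D ^ (m+1)) x = 0 := by
    intro x hx
    obtain ⟨n, hn⟩ := hδ x
    have h0 : (D ^ 0) x ≠ 0 := by simpa using hx
    -- take the largest m < n with D^m x ≠ 0... use minimal n with D^n x = 0
    have hne : ∃ n, (D ^ n) x = 0 := ⟨n, hn⟩
    classical
    let N := Nat.find hne
    have hN : (D ^ N) x = 0 := Nat.find_spec hne
    have hNpos : N ≠ 0 := by
      intro h0'
      rw [h0'] at hN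
      exact h0 hN
    obtain ⟨m, hm⟩ := Nat.exists_eq_succ_of_ne_zero hNpos
    refine ⟨m, ?_, by rw [← Nat.succ_eq_add_one, ← hm]; exact hN⟩
    exact Nat.find_min hne (by omega)
  obtain ⟨m, hm1, hm2⟩ := exm f hf
  obtain ⟨p, hp1, hp2⟩ := exm g hg
  -- key: δ^{m+p}(fg) = C(m+p, m) * δ^m f * δ^p g + terms that vanish... only if m+p ≥ 1
  by_contra hcon
  have hmp : 1 ≤ m + p := by
    by_contra hmp
    push_neg at hmp
    have hm0 : m = 0 := by omega
    have hp0 : p = 0 := by omega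
    subst hm0; subst hp0
    apply hcon
    constructor
    · have := hm2; exact (by simpa [pow_one] using this : D f = 0)
    · have := hp2; exact (by simpa [pow_one] using this : D g = 0)
  -- all iterates of fg vanish from degree 1 on
  have hfg : ∀ j : ℕ, (D ^ (j + 1)) (f * g) = 0 := by
    intro j
    rw [pow_succ, Module.End.mul_apply]
    show (D ^ j) (δ (f * g)) = 0
    rw [h, map_zero]
  have hvan : ∀ a b : ℕ, m < a → (D ^ a) f = 0 := by
    intro a b ha
    obtain ⟨c, hc⟩ := Nat.exists_eq_add_of_le ha
    rw [hc, add_comm, pow_add, Module.End.mul_apply]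
    have : (D ^ (m+1)) f = 0 := hm2
    rw [this, map_zero]
  have hvang : ∀ a : ℕ, p < a → (D ^ a) g = 0 := by
    intro a ha
    obtain ⟨c, hc⟩ := Nat.exists_eq_add_of_le ha
    rw [hc, add_comm, pow_add, Module.End.mul_apply, hp2, map_zero]
  -- compute δ^{m+p}(fg)
  have hkey := iter_leibniz δ f g (m + p)
  rw [show m + p = (m + p - 1) + 1 by omega, hfg (m + p - 1)] at hkey
  rw [show (m + p - 1) + 1 = m + p by omega] at hkey
  have hzero : (0 : R) = ((m+p).choose m : R) * ((D ^ m) f * (D ^ p) g) := by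
    rw [hkey]
    rw [Finset.sum_eq_single m]
    · rw [Nat.add_sub_cancel_left]
    · intro i hi hne
      rw [Finset.mem_range] at hi
      rcases Nat.lt_or_ge m i with hlt | hge
      · rw [hvan i 0 hlt]; ring
      · have : p < m + p - i := by omega
        rw [hvang _ this]; ring
    · intro hmem
      exfalso; apply hmem; rw [Finset.mem_range]; omega
  haveI : CharZero R := charZero_of_injective_algebraMap (algebraMap k R).injective
  have hC : ((m+p).choose m : R) ≠ 0 :=
    Nat.cast_ne_zero.mpr (Nat.choose_pos (Nat.le_add_right m p)).ne'
  have hmul : (D ^ m) f * (D ^ p) g ≠ 0 := mul_ne_zero hm1 hp1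
  exact (mul_ne_zero hC hmul) hzero.symm
end

section
/- Let R be an integral domain over a field k of characteristic zero, δ a locally nilpotent derivation of R, and f ∈ R such that f divides δ(f). Then δ(f) = 0. -/
open Finset Nat

theorem iterate_leibniz {k R : Type*} [CommRing k] [CommRing R] [Algebra k R]
    (δ : Derivation k R R) (n : ℕ) (a b : R) :
    (⇑δ)^[n] (a * b) = ∑ ij ∈ antidiagonal n, n.choose ij.1 • ((⇑δ)^[ij.1] a * (⇑δ)^[ij.2] b) := by
  induction n with
  | zero => simp
  | succ n ih =>
    rw [Finset.sum_antidiagonal_choose_succ_nsmul (M := R)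
      (fun i j => (⇑δ)^[i] a * (⇑δ)^[j] b) n]
    simp only [Function.iterate_succ_apply', ih, map_sum, map_nsmul, Derivation.leibniz,
      smul_eq_mul, smul_add, sum_add_distrib]
    congr 1
    refine Finset.sum_congr rfl fun ⟨i, j⟩ hij ↦ ?_
    rw [n.choose_symm_of_eq_add (mem_antidiagonal.1 hij).symm]
    ring

theorem iterate_leibniz' {k R : Type*} [CommRing k] [CommRing R] [Algebra k R]
    (δ : Derivation k R R) (n : ℕ) (a b : R) :
    (⇑δ)^[n] (a * b) = ∑ i ∈ range (n + 1), n.choose i • ((⇑δ)^[i] a * (⇑δ)^[n - i] b) := by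
  rw [iterate_leibniz]
  exact sum_antidiagonal_eq_sum_range_succ (fun i j ↦ n.choose i • ((⇑δ)^[i] a * (⇑δ)^[j] b)) n

theorem iterate_zero_mono {k R : Type*} [CommRing k] [CommRing R] [Algebra k R]
    (δ : Derivation k R R) (g : R) {n m : ℕ} (hn : (⇑δ)^[n] g = 0) (hnm : n ≤ m) :
    (⇑δ)^[m] g = 0 := by
  obtain ⟨c, rfl⟩ := Nat.exists_eq_add_of_le hnm
  rw [add_comm, Function.iterate_add_apply, hn]
  exact Function.iterate_fixed (map_zero δ) c

/-- If `δ` is a locally nilpotent derivation of a domain over a field of characteristic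
zero and `f ∣ δ f`, then `δ f = 0`. -/
theorem stmt2 {k R : Type*} [Field k] [CharZero k] [CommRing R] [IsDomain R] [Algebra k R]
    (δ : Derivation k R R) (hδ : IsLND δ)
    (f : R) (h : f ∣ δ f) :
    δ f = 0 := by
  by_contra hne
  have hf : f ≠ 0 := fun hf0 => hne (by simp [hf0])
  obtain ⟨a, ha⟩ := h
  have hane : a ≠ 0 := fun h0 => hne (by simp [ha, h0])
  haveI : CharZero R := charZero_of_injective_algebraMap (algebraMap k R).injective
  classical
  -- exact "degree" for nonzero elements
  have key : ∀ g : R, g ≠ 0 → ∃ n : ℕ, (⇑δ)^[n] g ≠ 0 ∧ (⇑δ)^[n + 1] g = 0 := by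
    intro g hg
    obtain ⟨n, hn⟩ := hδ g
    rw [Module.End.pow_apply] at hn
    have hex : ∃ n, (⇑δ)^[n] g = 0 := ⟨n, hn⟩
    have hm : (⇑δ)^[Nat.find hex] g = 0 := Nat.find_spec hex
    have hmpos : Nat.find hex ≠ 0 := by
      intro h0
      rw [h0] at hm; exact hg hm
    obtain ⟨m', hm'⟩ := Nat.exists_eq_succ_of_ne_zero hmpos
    refine ⟨m', Nat.find_min hex (by omega), ?_⟩
    rw [hm'] at hm
    exact hm
  obtain ⟨p, hp1, hp2⟩ := key f hf
  obtain ⟨q, hq1, hq2⟩ := key a hane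
  -- compute δ^[p+q] (f * a)
  have hsum := iterate_leibniz' δ (p + q) f a
  have hzero : (⇑δ)^[p + q] (f * a) = 0 := by
    have : (⇑δ)^[p + q] (f * a) = (⇑δ)^[p + q + 1] f := by
      rw [← ha, ← Function.iterate_succ_apply]
    rw [this]
    exact iterate_zero_mono δ f hp2 (by omega)
  rw [hzero] at hsum
  -- all terms except i = p vanish
  have hterm : ∀ i ∈ range (p + q + 1), i ≠ p →
      (p + q).choose i • ((⇑δ)^[i] f * (⇑δ)^[p + q - i] a) = 0 := by
    intro i _ hip
    rcases lt_or_gt_of_ne hip with hlt | hgt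
    · have : (⇑δ)^[p + q - i] a = 0 := iterate_zero_mono δ a hq2 (by omega)
      rw [this, mul_zero, smul_zero]
    · have : (⇑δ)^[i] f = 0 := iterate_zero_mono δ f hp2 (by omega)
      rw [this, zero_mul, smul_zero]
  have hmain := Finset.sum_eq_single_of_mem p (by simp [Finset.mem_range]) hterm
  rw [hmain] at hsum
  have : (p + q - p) = q := by omega
  rw [this] at hsum
  have hC : ((p + q).choose p : R) ≠ 0 :=
    Nat.cast_ne_zero.mpr (Nat.choose_pos (by omega)).ne'
  rw [nsmul_eq_mul] at hsum
  rcases _root_.mul_eq_zero.mp hsum.symm with h1 | h2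
  · exact hC h1
  · rcases _root_.mul_eq_zero.mp h2 with h3 | h4
    · exact hp1 h3
    · exact hq1 h4
end

section
/- Let R be an integral domain over a field k of characteristic zero, δ a locally nilpotent derivation of R, and f, g ∈ R such that f divides δ(g) and g divides δ(f). Then δ(f) = 0 or δ(g) = 0. -/
open Finset

section aux

variable {k R : Type*} [CommRing k] [CommRing R] [Algebra k R] (δ : Derivation k R R)

local notation "D" => (δ.toLinearMap : Module.End k R)

lemma D_mul (x y : R) : D (x * y) = D x * y + x * D y := by
  have := δ.leibniz x y
  simpa [smul_eq_mul, mul_comm, add_comm] using this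

lemma iter_leibniz_s3 (n : ℕ) (x y : R) :
    (D ^ n) (x * y) =
      ∑ i ∈ range (n + 1), n.choose i • ((D ^ (n - i)) x * (D ^ i) y) := by
  induction n with
  | zero => simp
  | succ n IH =>
    calc
      (D ^ (n + 1)) (x * y) =
          D (∑ i ∈ range (n + 1), n.choose i • ((D ^ (n - i)) x * (D ^ i) y)) := by
        rw [pow_succ', Module.End.mul_apply, IH]
      _ = (∑ i ∈ range (n + 1), n.choose i • ((D ^ (n - i + 1)) x * (D ^ i) y)) +
          ∑ i ∈ range (n + 1), n.choose i • ((D ^ (n - i)) x * (D ^ (i + 1)) y) := by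
        rw [map_sum]
        simp_rw [map_nsmul, D_mul, pow_succ', Module.End.mul_apply, smul_add, sum_add_distrib]
      _ = (∑ i ∈ range (n + 1), n.choose (i + 1) • ((D ^ (n - i)) x * (D ^ (i + 1)) y)) +
            1 • ((D ^ (n + 1)) x * (D ^ 0) y) +
          ∑ i ∈ range (n + 1), n.choose i • ((D ^ (n - i)) x * (D ^ (i + 1)) y) := ?_
      _ = ((∑ i ∈ range (n + 1), n.choose i • ((D ^ (n - i)) x * (D ^ (i + 1)) y)) +
            ∑ i ∈ range (n + 1), n.choose (i + 1) • ((D ^ (n - i)) x * (D ^ (i + 1)) y)) +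
            1 • ((D ^ (n + 1)) x * (D ^ 0) y) := by
        rw [add_comm, add_assoc]
      _ = (∑ i ∈ range (n + 1),
            (n + 1).choose (i + 1) • ((D ^ (n + 1 - (i + 1))) x * (D ^ (i + 1)) y)) +
            1 • ((D ^ (n + 1)) x * (D ^ 0) y) := by
        simp_rw [Nat.choose_succ_succ, Nat.succ_sub_succ, add_smul, sum_add_distrib]
      _ = ∑ i ∈ range (n + 2),
            (n + 1).choose i • ((D ^ (n + 1 - i)) x * (D ^ i) y) := by
        rw [sum_range_succ' _ (n + 1), Nat.choose_zero_right, tsub_zero]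
    congr
    refine (sum_range_succ' _ _).trans (congr_arg₂ (· + ·) ?_ ?_)
    · rw [sum_range_succ, Nat.choose_succ_self, zero_smul, add_zero]
      refine sum_congr rfl fun i hi => ?_
      rw [mem_range] at hi
      rw [show n - (i + 1) + 1 = n - i by omega]
    · rw [Nat.choose_zero_right, tsub_zero]

lemma D_pow_zero_of_le {x : R} {m n : ℕ} (h : m ≤ n) (hx : (D ^ m) x = 0) :
    (D ^ n) x = 0 := by
  obtain ⟨c, rfl⟩ := Nat.exists_eq_add_of_le h
  rw [add_comm, pow_add, Module.End.mul_apply, hx, map_zero]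

end aux

/-- If `δ` is a locally nilpotent derivation of a domain over a field of characteristic
zero and `f ∣ δ g`, `g ∣ δ f`, then `δ f = 0` or `δ g = 0`. -/
theorem stmt3 {k R : Type*} [Field k] [CharZero k] [CommRing R] [IsDomain R] [Algebra k R]
    (δ : Derivation k R R) (hδ : IsLND δ)
    (f g : R) (hfg : f ∣ δ g) (hgf : g ∣ δ f) :
    δ f = 0 ∨ δ g = 0 := by
  classical
  by_contra hc
  push_neg at hc
  obtain ⟨hf, hg⟩ := hc
  haveI : CharZero R := charZero_of_injective_algebraMap (algebraMap k R).injective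
  set D : Module.End k R := δ.toLinearMap with hD
  -- ν x := (least n with D^n x = 0) - 1 : top degree
  have key : ∀ x : R, x ≠ 0 → ∃ ν : ℕ, (D ^ ν) x ≠ 0 ∧ (D ^ (ν + 1)) x = 0 := by
    intro x hx
    have h := hδ x
    refine ⟨Nat.find h - 1, ?_, ?_⟩
    · intro h0
      have h1 : Nat.find h ≤ Nat.find h - 1 := Nat.find_le h0
      have h2 : 0 < Nat.find h := by
        rcases Nat.eq_zero_or_pos (Nat.find h) with hp | hp
        · exfalso; apply hx; simpa [hp] using Nat.find_spec h
        · exact hp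
      omega
    · have h2 : 0 < Nat.find h := by
        rcases Nat.eq_zero_or_pos (Nat.find h) with hp | hp
        · exfalso; apply hx; simpa [hp] using Nat.find_spec h
        · exact hp
      have : Nat.find h - 1 + 1 = Nat.find h := by omega
      rw [this]; exact Nat.find_spec h
  -- multiplicativity
  have nsmul_ne : ∀ (n : ℕ) (r : R), n ≠ 0 → r ≠ 0 → (n : ℕ) • r ≠ 0 := by
    intro n r hn hr
    rw [nsmul_eq_mul]
    exact mul_ne_zero (Nat.cast_ne_zero.mpr hn) hr
  have mul_deg : ∀ (x y : R) (m n : ℕ), (D ^ m) x ≠ 0 → (D ^ (m + 1)) x = 0 →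
      (D ^ n) y ≠ 0 → (D ^ (n + 1)) y = 0 →
      (D ^ (m + n)) (x * y) ≠ 0 ∧ (D ^ (m + n + 1)) (x * y) = 0 := by
    intro x y m n hx hx1 hy hy1
    constructor
    · rw [iter_leibniz_s3]
      have : ∑ i ∈ range (m + n + 1), (m + n).choose i • ((D ^ (m + n - i)) x * (D ^ i) y)
          = (m + n).choose n • ((D ^ m) x * (D ^ n) y) := by
        rw [Finset.sum_eq_single n]
        · rw [Nat.add_sub_cancel]
        · intro i hi hin
          rw [mem_range] at hi
          rcases lt_or_gt_of_ne hin with h | h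
          · have : (D ^ (m + n - i)) x = 0 := D_pow_zero_of_le δ (by omega) hx1
            rw [this, zero_mul, smul_zero]
          · have : (D ^ i) y = 0 := D_pow_zero_of_le δ (by omega) hy1
            rw [this, mul_zero, smul_zero]
        · intro h; exfalso; apply h; rw [mem_range]; omega
      rw [this]
      exact nsmul_ne _ _ (Nat.choose_pos (show n ≤ m + n by omega)).ne'
        (mul_ne_zero hx hy)
    · rw [iter_leibniz_s3]
      apply Finset.sum_eq_zero
      intro i hi
      rw [mem_range] at hi
      rcases le_or_gt (n + 1) i with h | h
      · have : (D ^ i) y = 0 := D_pow_zero_of_le δ h hy1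
        rw [this, mul_zero, smul_zero]
      · have : (D ^ (m + n + 1 - i)) x = 0 := D_pow_zero_of_le δ (by omega) hx1
        rw [this, zero_mul, smul_zero]
  -- set up
  obtain ⟨a, ha⟩ := hfg
  obtain ⟨b, hb⟩ := hgf
  have hf0 : f ≠ 0 := fun h => hg (by rw [ha, h, zero_mul])
  have hg0 : g ≠ 0 := fun h => hf (by rw [hb, h, zero_mul])
  have ha0 : a ≠ 0 := fun h => hg (by rw [ha, h, mul_zero])
  have hb0 : b ≠ 0 := fun h => hf (by rw [hb, h, mul_zero])
  obtain ⟨mf, hmf, hmf1⟩ := key f hf0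
  obtain ⟨mg, hmg, hmg1⟩ := key g hg0
  obtain ⟨ma, hma, hma1⟩ := key a ha0
  obtain ⟨mb, hmb, hmb1⟩ := key b hb0
  -- degree of δ x is (deg x) - 1 and deg x ≥ 1 when δ x ≠ 0
  -- D^(mg - 1) (δ g) ≠ 0 and deg (δ g) = mg - 1, but δ g = f * a has degree mf + ma
  have hdg : ∀ x : R, ∀ m : ℕ, δ x ≠ 0 → (D ^ m) x ≠ 0 → (D ^ (m + 1)) x = 0 →
      1 ≤ m ∧ (D ^ (m - 1)) (δ x) ≠ 0 ∧ (D ^ m) (δ x) = 0 := by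
    intro x m hx hm hm1
    have e : ∀ j : ℕ, (D ^ j) (δ x) = (D ^ (j + 1)) x := by
      intro j
      rw [pow_succ, Module.End.mul_apply]
      rfl
    have h1 : 1 ≤ m := by
      by_contra h
      have hm0 : m = 0 := by omega
      subst hm0
      apply hx
      have h2 := hm1
      rw [← e 0] at h2
      simpa using h2
    refine ⟨h1, ?_, ?_⟩
    · rw [e]
      have : m - 1 + 1 = m := by omega
      rw [this]; exact hm
    · rw [e]; exact hm1
  obtain ⟨hmg1', hdg1, hdg0⟩ := hdg g mg hg hmg hmg1
  obtain ⟨hmf1', hdf1, hdf0⟩ := hdg f mf hf hmf hmf1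
  -- δ g = f * a : degrees
  have h1 := mul_deg f a mf ma hmf hmf1 hma hma1
  have h2 := mul_deg g b mg mb hmg hmg1 hmb hmb1
  rw [← ha] at h1
  rw [← hb] at h2
  -- deg (δ g) = mg - 1 = mf + ma, so mg = mf + ma + 1 ≥ mf + 1
  have e1 : mg - 1 = mf + ma := by
    by_contra hne
    rcases lt_or_gt_of_ne hne with h | h
    · exact h1.1 (D_pow_zero_of_le δ (by omega) hdg0)
    · exact hdg1 (D_pow_zero_of_le δ (by omega) h1.2)
  have e2 : mf - 1 = mg + mb := by
    by_contra hne
    rcases lt_or_gt_of_ne hne with h | h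
    · exact h2.1 (D_pow_zero_of_le δ (by omega) hdf0)
    · exact hdf1 (D_pow_zero_of_le δ (by omega) h2.2)
  omega
end

section
/- Let R be an algebra graded by ℤ^k equipped with a total translation-invariant order, and let δ be a locally nilpotent derivation of R with homogeneous decomposition δ = δ₁ + ⋯ + δ_p where deg δ₁ < ⋯ < deg δ_p and all δ_i are nonzero homogeneous derivations. Then δ₁ and δ_p are locally nilpotent. -/
/-- A derivation is homogeneous of degree `d` with respect to a grading `𝒜` if it maps
each graded piece `𝒜 g` into `𝒜 (g + d)`. -/
def IsHomogeneousDer {k R G : Type*} [CommRing k] [CommRing R] [Algebra k R]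
    [AddCommGroup G] (𝒜 : G → Submodule k R) (δ : Derivation k R R) (d : G) : Prop :=
  ∀ (g : G), ∀ r ∈ 𝒜 g, δ r ∈ 𝒜 (g + d)

lemma derivation_sum_apply {k R : Type*} [CommRing k] [CommRing R] [Algebra k R] {p : ℕ}
    (δs : Fin p → Derivation k R R) (x : R) : (∑ i, δs i) x = ∑ i, δs i x := by
  induction (Finset.univ : Finset (Fin p)) using Finset.induction with
  | empty => simp
  | insert _ _ h ih => simp [Finset.sum_insert h, ih]

lemma key_lnd {k R G : Type*} [Field k] [CommRing R] [Algebra k R]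
    [AddCommGroup G] [DecidableEq G]
    (𝒜 : G → Submodule k R) [GradedAlgebra 𝒜]
    (le : G → G → Prop)
    (hrefl : ∀ a, le a a)
    (htrans : ∀ a b c, le a b → le b c → le a c)
    (hanti : ∀ a b, le a b → le b a → a = b)
    (htr : ∀ a b c, le a b → le (a + c) (b + c))
    {p : ℕ} (δs : Fin p → Derivation k R R) (ds : Fin p → G)
    (hhom : ∀ i, IsHomogeneousDer 𝒜 (δs i) (ds i))
    (i₀ : Fin p) (hmin : ∀ i, le (ds i₀) (ds i))
    (hinj : ∀ i, ds i = ds i₀ → i = i₀)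
    (δ : Derivation k R R) (hsum : δ = ∑ i, δs i)
    (hδ : IsLND δ) : IsLND (δs i₀) := by
  classical
  set d₀ := ds i₀ with hd₀
  set B : G → Submodule k R := fun h => ⨆ h' : {x : G // le h x}, 𝒜 h'.1 with hB
  have mem_B : ∀ {h h' : G} {r : R}, r ∈ 𝒜 h' → le h h' → r ∈ B h := by
    intro h h' r hr hle
    exact Submodule.mem_iSup_of_mem ⟨h', hle⟩ hr
  have hkey : ∀ (h h' : G) (i : Fin p), le h h' → le (h + d₀) (h' + ds i) := by
    intro h h' i hle
    refine htrans _ (h' + d₀) _ (htr _ _ _ hle) ?_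
    have := htr _ _ h' (hmin i)
    rwa [add_comm d₀ h', add_comm (ds i) h'] at this
  have heq : ∀ (h h' : G) (i : Fin p), le h h' → h' + ds i = h + d₀ → h' = h ∧ i = i₀ := by
    intro h h' i hle heq
    have h1 : le (h + d₀) (h' + d₀) := htr _ _ _ hle
    have h2 : le (h' + d₀) (h' + ds i) := by
      have := htr _ _ h' (hmin i)
      rwa [add_comm d₀ h', add_comm (ds i) h'] at this
    rw [heq] at h2
    have h3 : h' + d₀ = h + d₀ := hanti _ _ h2 h1
    have h4 : h' = h := add_right_cancel h3
    refine ⟨h4, hinj i ?_⟩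
    rw [h4] at heq
    exact add_left_cancel heq
  have hstep : ∀ (h : G) (x : R), x ∈ B h →
      δ x ∈ B (h + d₀) ∧
        GradedAlgebra.proj 𝒜 (h + d₀) (δ x) = δs i₀ (GradedAlgebra.proj 𝒜 h x) := by
    intro h x hx
    refine Submodule.iSup_induction (motive := fun x => δ x ∈ B (h + d₀) ∧
        GradedAlgebra.proj 𝒜 (h + d₀) (δ x) = δs i₀ (GradedAlgebra.proj 𝒜 h x)) _ hx ?_ ?_ ?_
    · rintro ⟨h', hle⟩ r hr
      have hr : r ∈ 𝒜 h' := hr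
      have hδr : δ r = ∑ i, δs i r := by rw [hsum]; exact derivation_sum_apply δs r
      constructor
      · rw [hδr]
        exact Submodule.sum_mem _ fun i _ => mem_B (hhom i h' r hr) (hkey h h' i hle)
      · rw [hδr, map_sum]
        by_cases hh : h' = h
        · subst hh
          rw [Finset.sum_eq_single i₀]
          · rw [GradedAlgebra.proj_apply,
              DirectSum.decompose_of_mem_same 𝒜 (hhom i₀ h' r hr),
              GradedAlgebra.proj_apply, DirectSum.decompose_of_mem_same 𝒜 hr]
          · intro i _ hi
            rw [GradedAlgebra.proj_apply,
              DirectSum.decompose_of_mem_ne 𝒜 (hhom i h' r hr)]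
            intro hcon
            exact hi ((heq h' h' i (hrefl h') hcon).2)
          · simp
        · have hz : ∀ i ∈ Finset.univ, GradedAlgebra.proj 𝒜 (h + d₀) (δs i r) = 0 := by
            intro i _
            rw [GradedAlgebra.proj_apply,
              DirectSum.decompose_of_mem_ne 𝒜 (hhom i h' r hr)]
            intro hcon
            exact hh (heq h h' i hle hcon).1
          rw [Finset.sum_eq_zero hz, GradedAlgebra.proj_apply,
            DirectSum.decompose_of_mem_ne 𝒜 hr hh, map_zero]
    · simp
    · rintro x y ⟨hx1, hx2⟩ ⟨hy1, hy2⟩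
      refine ⟨by rw [map_add]; exact Submodule.add_mem _ hx1 hy1, ?_⟩
      simp only [map_add, hx2, hy2]
  have hiter : ∀ (n : ℕ) (h : G) (x : R), x ∈ B h →
      ((δ.toLinearMap : Module.End k R) ^ n) x ∈ B (h + n • d₀) ∧
        GradedAlgebra.proj 𝒜 (h + n • d₀) (((δ.toLinearMap : Module.End k R) ^ n) x)
          = (((δs i₀).toLinearMap : Module.End k R) ^ n) (GradedAlgebra.proj 𝒜 h x) := by
    intro n
    induction n with
    | zero => intro h x hx; simpa using hx
    | succ n ih =>
      intro h x hx
      have hx1 := (hstep h x hx).1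
      have hx2 := (hstep h x hx).2
      have hmain := ih (h + d₀) (δ x) hx1
      have hdeg : h + d₀ + n • d₀ = h + (n + 1) • d₀ := by
        rw [succ_nsmul]; abel
      rw [hdeg] at hmain
      have happ : ∀ y : R, ((δ.toLinearMap : Module.End k R) ^ (n + 1)) y
          = ((δ.toLinearMap : Module.End k R) ^ n) (δ y) := by
        intro y; rw [pow_succ, Module.End.mul_apply]; rfl
      refine ⟨by rw [happ]; exact hmain.1, ?_⟩
      rw [happ, hmain.2, hx2, pow_succ, Module.End.mul_apply]
      rfl
  have hhomog : ∀ (g : G) (r : R), r ∈ 𝒜 g →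
      ∃ n, (((δs i₀).toLinearMap : Module.End k R) ^ n) r = 0 := by
    intro g r hr
    obtain ⟨n, hn⟩ := hδ r
    refine ⟨n, ?_⟩
    have hBg : r ∈ B g := mem_B hr (hrefl g)
    have h2 := (hiter n g r hBg).2
    rw [hn, map_zero, GradedAlgebra.proj_apply,
      DirectSum.decompose_of_mem_same 𝒜 hr] at h2
    exact h2.symm
  intro x
  set c : G → R := fun g => (DirectSum.decompose 𝒜 x g : R) with hc
  have hcmem : ∀ g, c g ∈ 𝒜 g := fun g => SetLike.coe_mem _
  have hex : ∀ g, ∃ n, (((δs i₀).toLinearMap : Module.End k R) ^ n) (c g) = 0 :=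
    fun g => hhomog g (c g) (hcmem g)
  choose n hn using hex
  set s := (DirectSum.decompose 𝒜 x).support with hs
  refine ⟨s.sup n, ?_⟩
  have hx : x = ∑ g ∈ s, c g := (DirectSum.sum_support_decompose 𝒜 x).symm
  conv_lhs => rw [hx]
  rw [map_sum]
  refine Finset.sum_eq_zero fun g hg => ?_
  have hle : n g ≤ s.sup n := Finset.le_sup hg
  have : (((δs i₀).toLinearMap : Module.End k R) ^ s.sup n) (c g)
      = (((δs i₀).toLinearMap : Module.End k R) ^ (s.sup n - n g))
        ((((δs i₀).toLinearMap : Module.End k R) ^ n g) (c g)) := by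
    rw [← Module.End.mul_apply, ← pow_add, Nat.sub_add_cancel hle]
  rw [this, hn g, map_zero]

/-- Let `R` be a finitely generated commutative algebra over a field of characteristic
zero, graded by an ordered group `G ≅ ℤ^k` (total translation-invariant order).  If a
locally nilpotent derivation `δ` decomposes as `δ = δ₁ + ⋯ + δ_p` with nonzero
homogeneous summands of strictly increasing degrees, then the lowest and the highest
components `δ₁` and `δ_p` are locally nilpotent. -/
theorem stmt6 {k R : Type*} (m : ℕ) [Field k] [CharZero k] [CommRing R] [Algebra k R]
    (hfg : (⊤ : Subalgebra k R).FG)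
    [inst : LinearOrder (Fin m → ℤ)]
    (hord : ∀ a b c : Fin m → ℤ, a ≤ b → a + c ≤ b + c)
    (𝒜 : (Fin m → ℤ) → Submodule k R) [GradedAlgebra 𝒜]
    (p : ℕ) (hp : 0 < p)
    (δs : Fin p → Derivation k R R) (ds : Fin p → (Fin m → ℤ))
    (hmono : StrictMono ds)
    (hhom : ∀ i, IsHomogeneousDer 𝒜 (δs i) (ds i))
    (hne : ∀ i, δs i ≠ 0)
    (δ : Derivation k R R) (hsum : δ = ∑ i, δs i)
    (hδ : IsLND δ) :
    IsLND (δs ⟨0, hp⟩) ∧ IsLND (δs ⟨p - 1, by omega⟩) := by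
  classical
  constructor
  · exact key_lnd 𝒜 (· ≤ ·) (fun a => le_refl a) (fun a b c => le_trans)
      (fun a b => le_antisymm) hord δs ds hhom ⟨0, hp⟩
      (fun i => hmono.monotone (by simp [Fin.le_def]))
      (fun i h => hmono.injective h) δ hsum hδ
  · exact key_lnd 𝒜 (fun a b => b ≤ a) (fun a => le_refl a)
      (fun a b c hab hbc => le_trans hbc hab)
      (fun a b h1 h2 => le_antisymm h2 h1)
      (fun a b c h => hord _ _ _ h) δs ds hhom ⟨p - 1, by omega⟩
      (fun i => hmono.monotone (by simp [Fin.le_def]; omega))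
      (fun i h => hmono.injective h) δ hsum hδ
end

section
/- Let k be an algebraically closed field of characteristic zero containing a square root i of −1, and let R = k[x,y,z]/(x² + y² + z^γ) for an integer γ ≥ 2. Then the formulas δ₀(x) = iγz^{γ−1}, δ₀(y) = γz^{γ−1}, δ₀(z) = −2(ix + y) define a well-defined derivation of R, and δ₀ is locally nilpotent. -/
set_option synthInstance.maxHeartbeats 400000
set_option maxHeartbeats 1000000
open MvPolynomial

section Aux

variable {k R : Type*} [CommRing k] [CommRing R] [Algebra k R]

theorem endpow_mono {M : Type*} [AddCommGroup M] [Module k M]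
    (L : Module.End k M) {m n : ℕ} (h : m ≤ n) {a : M} (ha : (L ^ m) a = 0) :
    (L ^ n) a = 0 := by
  obtain ⟨c, rfl⟩ := Nat.exists_eq_add_of_le h
  rw [add_comm, pow_add, Module.End.mul_apply, ha, map_zero]

theorem lnd_key (δ : Derivation k R R) :
    ∀ s m n (a b : R), m + n = s + 1 →
      ((δ.toLinearMap : Module.End k R) ^ m) a = 0 →
      ((δ.toLinearMap : Module.End k R) ^ n) b = 0 →
      ((δ.toLinearMap : Module.End k R) ^ s) (a * b) = 0 := by
  intro s
  induction s with
  | zero =>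
    intro m n a b hmn ha hb
    rcases Nat.eq_zero_or_pos m with hm | hm
    · subst hm
      rw [pow_zero, Module.End.one_apply] at ha
      rw [pow_zero, Module.End.one_apply, ha, zero_mul]
    · have hn : n = 0 := by omega
      subst hn
      rw [pow_zero, Module.End.one_apply] at hb
      rw [pow_zero, Module.End.one_apply, hb, mul_zero]
  | succ t ih =>
    intro m n a b hmn ha hb
    rcases Nat.eq_zero_or_pos m with hm | hm
    · subst hm
      rw [pow_zero, Module.End.one_apply] at ha
      rw [ha, zero_mul, map_zero]
    rcases Nat.eq_zero_or_pos n with hn | hn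
    · subst hn
      rw [pow_zero, Module.End.one_apply] at hb
      rw [hb, mul_zero, map_zero]
    obtain ⟨m', rfl⟩ := Nat.exists_eq_add_of_lt hm
    obtain ⟨n', rfl⟩ := Nat.exists_eq_add_of_lt hn
    rw [zero_add] at *
    rw [pow_succ, Module.End.mul_apply]
    have hab : δ.toLinearMap (a * b) = a * δ b + b * δ a := by
      have := δ.leibniz a b
      simpa [smul_eq_mul] using this
    rw [hab, map_add]
    have h1 : ((δ.toLinearMap : Module.End k R) ^ t) (a * δ b) = 0 := by
      refine ih (m' + 1) n' a (δ b) (by omega) ha ?_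
      have : ((δ.toLinearMap : Module.End k R) ^ (n' + 1)) b
          = ((δ.toLinearMap : Module.End k R) ^ n') (δ b) := by
        rw [pow_succ, Module.End.mul_apply]; rfl
      rw [← this]; exact hb
    have h2 : ((δ.toLinearMap : Module.End k R) ^ t) (b * δ a) = 0 := by
      refine ih (n' + 1) m' b (δ a) (by omega) hb ?_
      have : ((δ.toLinearMap : Module.End k R) ^ (m' + 1)) a
          = ((δ.toLinearMap : Module.End k R) ^ m') (δ a) := by
        rw [pow_succ, Module.End.mul_apply]; rfl
      rw [← this]; exact ha
    rw [h1, h2, add_zero]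

theorem lnd_mul (δ : Derivation k R R) {m n : ℕ} {a b : R}
    (ha : ((δ.toLinearMap : Module.End k R) ^ m) a = 0)
    (hb : ((δ.toLinearMap : Module.End k R) ^ n) b = 0) :
    ((δ.toLinearMap : Module.End k R) ^ (m + n)) (a * b) = 0 :=
  lnd_key δ (m + n) (m + 1) n a b (by omega)
    (endpow_mono _ (Nat.le_succ m) ha) hb

theorem lnd_add (δ : Derivation k R R) {m n : ℕ} {a b : R}
    (ha : ((δ.toLinearMap : Module.End k R) ^ m) a = 0)
    (hb : ((δ.toLinearMap : Module.End k R) ^ n) b = 0) :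
    ((δ.toLinearMap : Module.End k R) ^ (max m n)) (a + b) = 0 := by
  rw [map_add, endpow_mono _ (le_max_left m n) ha, endpow_mono _ (le_max_right m n) hb,
    add_zero]

end Aux

/-- On `R = k[x,y,z]/(x² + y² + z^γ)` the formulas `δ₀ x = iγ z^{γ-1}`,
`δ₀ y = γ z^{γ-1}`, `δ₀ z = -2(ix + y)` define a well-defined derivation of `R`,
and this derivation is locally nilpotent. -/
theorem stmt10 {k : Type*} [Field k] [IsAlgClosed k] [CharZero k]
    (i : k) (hi : i ^ 2 = -1) (γ : ℕ) (hγ : 2 ≤ γ)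
    (I : Ideal (MvPolynomial (Fin 3) k))
    (hI : I = Ideal.span {X 0 ^ 2 + X 1 ^ 2 + X 2 ^ γ}) :
    ∃ δ : Derivation k (MvPolynomial (Fin 3) k ⧸ I) (MvPolynomial (Fin 3) k ⧸ I),
      δ (Ideal.Quotient.mk I (X 0))
          = Ideal.Quotient.mk I (C i * (γ : MvPolynomial (Fin 3) k) * X 2 ^ (γ - 1)) ∧
      δ (Ideal.Quotient.mk I (X 1))
          = Ideal.Quotient.mk I ((γ : MvPolynomial (Fin 3) k) * X 2 ^ (γ - 1)) ∧
      δ (Ideal.Quotient.mk I (X 2))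
          = Ideal.Quotient.mk I (-(2 : MvPolynomial (Fin 3) k) * (C i * X 0 + X 1)) ∧
      IsLND δ := by
  classical
  set P := MvPolynomial (Fin 3) k with hP
  set Q := P ⧸ I with hQ
  let mkI : P →+* Q := Ideal.Quotient.mk I
  -- the values of the derivation
  let v : Fin 3 → Q := ![mkI (C i * (γ : P) * X 2 ^ (γ - 1)),
    mkI ((γ : P) * X 2 ^ (γ - 1)), mkI (-(2 : P) * (C i * X 0 + X 1))]
  let D₀ : Derivation k P Q := mkDerivation k v
  have hD₀X : ∀ j : Fin 3, D₀ (X j) = v j := fun j => mkDerivation_X k v j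
  have hv0 : v 0 = mkI (C i * (γ : P) * X 2 ^ (γ - 1)) := rfl
  have hv1 : v 1 = mkI ((γ : P) * X 2 ^ (γ - 1)) := rfl
  have hv2 : v 2 = mkI (-(2 : P) * (C i * X 0 + X 1)) := rfl
  have halgP : algebraMap P Q = mkI := Ideal.Quotient.algebraMap_eq I
  have hsmulP : ∀ (p q : P), p • mkI q = mkI (p * q) := by
    intro p q
    rw [← smul_eq_mul]
    exact (Submodule.Quotient.mk_smul I p q).symm
  have hsmulP' : ∀ (p : P) (r : Q), p • r = mkI p * r := by
    intro p r
    obtain ⟨q, rfl⟩ := Ideal.Quotient.mk_surjective (I := I) r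
    rw [hsmulP, map_mul]
  have hsmulk : ∀ (c : k) (r : P), c • mkI r = mkI (C c * r) := by
    intro c r
    rw [← smul_eq_C_mul]
    exact (Submodule.Quotient.mk_smul I c r).symm
  have hksmul : ∀ (c : k) (r : Q), c • r = mkI (C c) * r := by
    intro c r
    obtain ⟨q, rfl⟩ := Ideal.Quotient.mk_surjective (I := I) r
    rw [hsmulk, map_mul]
  -- D₀ vanishes on I
  have hD₀f : D₀ (X 0 ^ 2 + X 1 ^ 2 + X 2 ^ γ) = 0 := by
    rw [map_add, map_add, Derivation.leibniz_pow, Derivation.leibniz_pow,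
      Derivation.leibniz_pow, hD₀X, hD₀X, hD₀X, hv0, hv1, hv2,
      hsmulP, hsmulP, hsmulP, ← map_nsmul, ← map_nsmul, ← map_nsmul,
      ← map_add, ← map_add]
    rw [show ((2 : ℕ) • (X 0 ^ (2-1) * (C i * (γ : P) * X 2 ^ (γ - 1)))
        + (2 : ℕ) • (X 1 ^ (2-1) * ((γ : P) * X 2 ^ (γ - 1)))
        + γ • (X 2 ^ (γ - 1) * (-(2 : P) * (C i * X 0 + X 1)))) = 0 by
      simp only [nsmul_eq_mul]
      norm_num
      ring]
    exact map_zero mkI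
  have hker : ∀ p ∈ I, D₀ p = 0 := by
    intro p hp
    rw [hI, Ideal.mem_span_singleton] at hp
    obtain ⟨a, rfl⟩ := hp
    rw [Derivation.leibniz, hD₀f, smul_zero, add_zero, hsmulP']
    have : mkI (X 0 ^ 2 + X 1 ^ 2 + X 2 ^ γ) = 0 := by
      rw [Ideal.Quotient.eq_zero_iff_mem, hI]
      exact Ideal.mem_span_singleton_self _
    rw [this, zero_mul]
  -- descend to a linear map on the quotient
  have hkerle : I.restrictScalars k ≤ LinearMap.ker D₀.toLinearMap := by
    intro p hp
    exact hker p hp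
  let Dlin : Q →ₗ[k] Q :=
    (Submodule.liftQ (I.restrictScalars k) D₀.toLinearMap hkerle).comp
      (Submodule.Quotient.restrictScalarsEquiv k I).symm.toLinearMap
  have hDlin : ∀ p : P, Dlin (mkI p) = D₀ p := by
    intro p
    show (Submodule.liftQ (I.restrictScalars k) D₀.toLinearMap hkerle)
      ((Submodule.Quotient.restrictScalarsEquiv k I).symm (mkI p)) = D₀ p
    have : (Submodule.Quotient.restrictScalarsEquiv k I).symm (mkI p)
        = Submodule.Quotient.mk p := Submodule.Quotient.restrictScalarsEquiv_symm_mk k I p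
    rw [this, Submodule.liftQ_apply]
    rfl
  have hsurj : Function.Surjective mkI := Ideal.Quotient.mk_surjective
  -- build the derivation
  let δ : Derivation k Q Q :=
    { toLinearMap := Dlin
      map_one_eq_zero' := by
        have : (1 : Q) = mkI 1 := rfl
        rw [this, hDlin, Derivation.map_one_eq_zero]
      leibniz' := by
        intro a b
        obtain ⟨p, rfl⟩ := hsurj a
        obtain ⟨q, rfl⟩ := hsurj b
        rw [← map_mul, hDlin, hDlin, hDlin, smul_eq_mul, smul_eq_mul,
          Derivation.leibniz, hsmulP', hsmulP'] }
  have hδ : ∀ p : P, δ (mkI p) = D₀ p := hDlin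
  -- the three formulas
  have hx : δ (mkI (X 0)) = mkI (C i * (γ : P) * X 2 ^ (γ - 1)) := by
    rw [hδ, hD₀X, hv0]
  have hy : δ (mkI (X 1)) = mkI ((γ : P) * X 2 ^ (γ - 1)) := by
    rw [hδ, hD₀X, hv1]
  have hz : δ (mkI (X 2)) = mkI (-(2 : P) * (C i * X 0 + X 1)) := by
    rw [hδ, hD₀X, hv2]
  refine ⟨δ, hx, hy, hz, ?_⟩
  -- local nilpotency
  set L : Module.End k Q := δ.toLinearMap with hL
  have hLδ : ∀ r : Q, L r = δ r := fun r => rfl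
  set z : Q := mkI (X 2) with hzdef
  set u : Q := mkI (C i * X 0 + X 1) with hudef
  have hu0 : δ u = 0 := by
    rw [hudef, hδ]
    have hC : D₀ (C i) = 0 := by
      rw [← MvPolynomial.algebraMap_eq]; exact D₀.map_algebraMap i
    rw [map_add, Derivation.leibniz, hC, smul_zero, add_zero, hD₀X, hD₀X,
      hv0, hv1, hsmulP, ← map_add]
    have hpoly : (C i * (C i * (γ : P) * X 2 ^ (γ - 1)) + (γ : P) * X 2 ^ (γ - 1)) = 0 := by
      have h2 : (C i : P) * C i = -1 := by
        rw [← C_mul, ← sq, hi]; simp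
      linear_combination ((γ : P) * X 2 ^ (γ - 1)) * h2
    rw [hpoly, map_zero]
  have hun : ∀ s : ℕ, δ (u ^ s) = 0 := by
    intro s
    rw [Derivation.leibniz_pow, hu0, smul_zero, smul_zero]
  have hzu : δ z = (-2 : k) • u := by
    rw [hz, hudef, hksmul]
    rw [show (C (-2 : k) : P) = -2 by rw [map_neg, map_ofNat]]
    rw [← map_mul]
  -- key nilpotency lemma
  have hQkey : ∀ j : ℕ, ∀ s : ℕ, (L ^ (j + 1)) (z ^ j * u ^ s) = 0 := by
    intro j
    induction j with
    | zero =>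
      intro s
      rw [pow_zero, one_mul, pow_one]
      exact hun s
    | succ j ih =>
      intro s
      have hstep : δ (z ^ (j + 1) * u ^ s)
          = (-2 * ((j : k) + 1)) • (z ^ j * u ^ (s + 1)) := by
        rw [Derivation.leibniz, hun, smul_zero, zero_add, Derivation.leibniz_pow, hzu]
        rw [show (j + 1) - 1 = j from rfl]
        rw [smul_eq_mul, smul_eq_mul, hksmul, hksmul, nsmul_eq_mul]
        rw [show (C (-2 * ((j : k) + 1)) : P) = C (-2 : k) * ((j : P) + 1) by
          rw [map_mul, map_add, map_one, map_natCast]]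
        rw [map_mul, map_add, map_one, map_natCast]
        push_cast
        ring
      have hL2 : (L ^ (j + 1 + 1)) (z ^ (j + 1) * u ^ s)
          = (L ^ (j + 1)) (δ (z ^ (j + 1) * u ^ s)) := by
        rw [pow_succ, Module.End.mul_apply]; rfl
      rw [hL2, hstep, map_smul, ih (s + 1), smul_zero]
  have hxnil : (L ^ (γ + 1)) (mkI (X 0)) = 0 := by
    have h1 : L (mkI (X 0)) = (i * (γ : k)) • (z ^ (γ - 1) * u ^ 0) := by
      rw [hLδ, hx, pow_zero, mul_one, hzdef, ← map_pow, hsmulk]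
      congr 1
      rw [map_mul, map_natCast]
    have h2 : (L ^ (γ + 1)) (mkI (X 0)) = (L ^ γ) (L (mkI (X 0))) := by
      rw [pow_succ, Module.End.mul_apply]
    rw [h2, h1, map_smul]
    have h3 := hQkey (γ - 1) 0
    rw [show γ - 1 + 1 = γ by omega] at h3
    rw [h3, smul_zero]
  have hynil : (L ^ (γ + 1)) (mkI (X 1)) = 0 := by
    have h1 : L (mkI (X 1)) = ((γ : k)) • (z ^ (γ - 1) * u ^ 0) := by
      rw [hLδ, hy, pow_zero, mul_one, hzdef, ← map_pow, hsmulk]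
      congr 1
    have h2 : (L ^ (γ + 1)) (mkI (X 1)) = (L ^ γ) (L (mkI (X 1))) := by
      rw [pow_succ, Module.End.mul_apply]
    rw [h2, h1, map_smul]
    have h3 := hQkey (γ - 1) 0
    rw [show γ - 1 + 1 = γ by omega] at h3
    rw [h3, smul_zero]
  have hznil : (L ^ 2) (mkI (X 2)) = 0 := by
    have h2 : (L ^ 2) (mkI (X 2)) = L (L (mkI (X 2))) := by
      rw [pow_succ, pow_one, Module.End.mul_apply]
    rw [h2, hLδ, hLδ, hzu, Derivation.map_smul, hu0, smul_zero]
  have hXnil : ∀ j : Fin 3, ∃ n : ℕ, (L ^ n) (mkI (X j)) = 0 := by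
    intro j
    fin_cases j
    · exact ⟨γ + 1, hxnil⟩
    · exact ⟨γ + 1, hynil⟩
    · exact ⟨2, hznil⟩
  intro g
  obtain ⟨p, rfl⟩ := hsurj g
  induction p using MvPolynomial.induction_on with
  | C c =>
    refine ⟨1, ?_⟩
    rw [pow_one, hLδ]
    rw [show mkI (C c) = algebraMap k Q c by
      rw [IsScalarTower.algebraMap_apply k P Q, halgP, MvPolynomial.algebraMap_eq]]
    exact δ.map_algebraMap c
  | add p q hp hq =>
    obtain ⟨m, hm⟩ := hp
    obtain ⟨n, hn⟩ := hq
    refine ⟨max m n, ?_⟩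
    rw [map_add]
    exact lnd_add δ hm hn
  | mul_X p j hp =>
    obtain ⟨m, hm⟩ := hp
    obtain ⟨n, hn⟩ := hXnil j
    refine ⟨m + n, ?_⟩
    rw [map_mul]
    exact lnd_mul δ hm hn
end

section
/- Let R = k[T₁₁,…,T₁n₁,…,T_{r1},…,T_{rn_r}]/I be the algebra over an algebraically closed field k of characteristic zero defined by the relations T_i^{l_i} − T_{i+1}^{l_{i+1}} − (a_{i+1} − a_i) = 0 for i = 1,…,r−1, where T_i^{l_i} = ∏_j T_{ij}^{l_{ij}} with all l_{ij} ≥ 1 and a₁,…,a_r ∈ k pairwise distinct. Suppose there is a tuple C = (c₁,…,c_r) with l_{i c_i} = 1 for all i except possibly one index i₀. Then the assignment δ_C(T_{i c_i}) = ∏_{k ≠ i} ∂T_k^{l_k}/∂T_{k c_k}, δ_C(T_{ij}) = 0 for j ≠ c_i, extends to a well-defined locally nilpotent derivation of R. -/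
set_option synthInstance.maxHeartbeats 1000000
set_option maxHeartbeats 1000000

open MvPolynomial

section Aux

variable {R A : Type*} [CommRing R] [CommRing A] [Algebra R A]

/-- Leibniz rule for a finite product. -/
lemma Derivation.map_finset_prod (d : Derivation R A A) {ι : Type*} [DecidableEq ι]
    (s : Finset ι) (f : ι → A) :
    d (∏ i ∈ s, f i) = ∑ i ∈ s, d (f i) * ∏ j ∈ s.erase i, f j := by
  induction s using Finset.induction_on with
  | empty => simp
  | insert a s ha ih =>
    have h2 : ∀ i ∈ s, d (f i) * ∏ j ∈ (insert a s).erase i, f j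
        = f a * (d (f i) * ∏ j ∈ s.erase i, f j) := by
      intro i hi
      rw [Finset.erase_insert_of_ne (by rintro rfl; exact ha hi),
        Finset.prod_insert (fun h => ha (Finset.mem_of_mem_erase h))]
      ring
    rw [Finset.prod_insert ha, d.leibniz, smul_eq_mul, smul_eq_mul, ih,
      Finset.sum_insert ha, Finset.erase_insert ha, Finset.sum_congr rfl h2,
      ← Finset.mul_sum]
    ring

lemma Derivation.pow_stable (d : Derivation R A A) {x : A} {m : ℕ}
    (hm : ((d.toLinearMap : Module.End R A) ^ m) x = 0) {N : ℕ} (hN : m ≤ N) :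
    ((d.toLinearMap : Module.End R A) ^ N) x = 0 := by
  rw [show N = (N - m) + m from by omega, pow_add, Module.End.mul_apply, hm, map_zero]

lemma Derivation.lnd_mul_aux (d : Derivation R A A) :
    ∀ (N a b : ℕ) (x y : A), a + b ≤ N →
      ((d.toLinearMap : Module.End R A) ^ a) x = 0 →
      ((d.toLinearMap : Module.End R A) ^ b) y = 0 →
      ((d.toLinearMap : Module.End R A) ^ (a + b)) (x * y) = 0 := by
  intro N
  induction N with
  | zero =>
    intro a b x y hab hx hy
    obtain rfl : a = 0 := by omega
    obtain rfl : b = 0 := by omega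
    simp only [pow_zero, Module.End.one_apply] at hx hy
    rw [hx, zero_mul, map_zero]

  | succ N ih =>
    intro a b x y hab hx hy
    match a, b with
    | 0, b =>
      simp only [pow_zero, Module.End.one_apply] at hx
      rw [zero_add, hx, zero_mul, map_zero]
    | a + 1, 0 =>
      simp only [pow_zero, Module.End.one_apply] at hy
      rw [add_zero, hy, mul_zero, map_zero]
    | a + 1, b + 1 =>
      have hdx : ((d.toLinearMap : Module.End R A) ^ a) (d x) = 0 := by
        rw [pow_succ, Module.End.mul_apply] at hx; exact hx
      have hdy : ((d.toLinearMap : Module.End R A) ^ b) (d y) = 0 := by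
        rw [pow_succ, Module.End.mul_apply] at hy; exact hy
      have h1 : ((d.toLinearMap : Module.End R A) ^ (a + (b + 1))) (d x * y) = 0 :=
        ih a (b + 1) (d x) y (by omega) hdx hy
      have h2 : ((d.toLinearMap : Module.End R A) ^ (a + (b + 1))) (x * d y) = 0 := by
        have := ih (a + 1) b x (d y) (by omega) hx hdy
        rwa [show a + 1 + b = a + (b + 1) from by omega] at this
      have hstep : (a + 1) + (b + 1) = (a + (b + 1)) + 1 := by omega
      rw [hstep, pow_succ, Module.End.mul_apply]
      have hlz : (d.toLinearMap : Module.End R A) (x * y) = d x * y + x * d y := by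
        show d (x * y) = _
        rw [d.leibniz, smul_eq_mul, smul_eq_mul]; ring
      rw [hlz, map_add, h1, h2, add_zero]

end Aux

/-- Let `R = k[T_{ij}]/I` be a trinomial algebra of Type 1, defined by the relations
`T_i^{l_i} - T_{i+1}^{l_{i+1}} - (a_{i+1} - a_i) = 0`, with pairwise distinct `a_i` and
all exponents `l_{ij} ≥ 1`.  If `C = (c_1,…,c_r)` is a tuple with `l_{i c_i} = 1` for
all `i` except possibly one index `i₀`, then the assignment
`δ_C(T_{i c_i}) = ∏_{m ≠ i} ∂T_m^{l_m}/∂T_{m c_m}`, `δ_C(T_{ij}) = 0` for `j ≠ c_i`,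
descends to a well-defined locally nilpotent derivation of `R`. -/
theorem stmt15 {k : Type*} [Field k] [IsAlgClosed k] [CharZero k]
    (r : ℕ) (hr : 2 ≤ r) (n : Fin r → ℕ) (hn : ∀ i, 1 ≤ n i)
    (l : (i : Fin r) → Fin (n i) → ℕ) (hl : ∀ i j, 1 ≤ l i j)
    (a : Fin r → k) (ha : Function.Injective a)
    (c : (i : Fin r) → Fin (n i)) (i₀ : Fin r) (hC : ∀ i, i ≠ i₀ → l i (c i) = 1)
    (T : Fin r → MvPolynomial (Σ i : Fin r, Fin (n i)) k)
    (hT : ∀ i, T i = ∏ j : Fin (n i), X (⟨i, j⟩ : Σ i : Fin r, Fin (n i)) ^ l i j)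
    (I : Ideal (MvPolynomial (Σ i : Fin r, Fin (n i)) k))
    (hI : I = Ideal.span {p | ∃ (i : ℕ) (h : i + 1 < r),
      p = T ⟨i, Nat.lt_of_succ_lt h⟩ - T ⟨i + 1, h⟩
          - C (a ⟨i + 1, h⟩ - a ⟨i, Nat.lt_of_succ_lt h⟩)})
    (D : Derivation k (MvPolynomial (Σ i : Fin r, Fin (n i)) k)
        (MvPolynomial (Σ i : Fin r, Fin (n i)) k))
    (hD : D = mkDerivation k (fun v : Σ i : Fin r, Fin (n i) =>
      if v.2 = c v.1 then
        Finset.prod (Finset.univ.erase v.1)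
          (fun m => pderiv (⟨m, c m⟩ : Σ i : Fin r, Fin (n i)) (T m))
      else 0)) :
    ∃ δ : Derivation k (MvPolynomial (Σ i : Fin r, Fin (n i)) k ⧸ I)
        (MvPolynomial (Σ i : Fin r, Fin (n i)) k ⧸ I),
      (∀ p : MvPolynomial (Σ i : Fin r, Fin (n i)) k,
        δ (Ideal.Quotient.mk I p) = Ideal.Quotient.mk I (D p)) ∧
      IsLND δ := by
  classical
  -- value of D on variables
  have hDX : ∀ (i : Fin r) (j : Fin (n i)), D (X (⟨i, j⟩ : Σ i : Fin r, Fin (n i))) =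
      if j = c i then
        (Finset.univ.erase i).prod
          (fun m => pderiv (⟨m, c m⟩ : Σ i : Fin r, Fin (n i)) (T m))
      else 0 := by
    intro i j; rw [hD, mkDerivation_X]
  -- partial derivative of T m
  have hpdTm : ∀ m : Fin r, pderiv (⟨m, c m⟩ : Σ i : Fin r, Fin (n i)) (T m) =
      l m (c m) • (X (⟨m, c m⟩ : Σ i : Fin r, Fin (n i)) ^ (l m (c m) - 1) *
        ∏ j ∈ Finset.univ.erase (c m), X (⟨m, j⟩ : Σ i : Fin r, Fin (n i)) ^ l m j) := by
    intro m
    rw [hT m, Derivation.map_finset_prod]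
    rw [Finset.sum_eq_single (c m)]
    · rw [Derivation.leibniz_pow, pderiv_X_self]
      simp only [smul_eq_mul, mul_one, smul_mul_assoc]
    · intro j _ hj
      rw [Derivation.leibniz_pow,
        pderiv_X_of_ne (i := (⟨m, c m⟩ : Σ i : Fin r, Fin (n i)))
          (j := (⟨m, j⟩ : Σ i : Fin r, Fin (n i)))
          (fun h => hj (sigma_mk_injective (β := fun i : Fin r => Fin (n i)) h))]
      simp
    · simp
  -- D of products of variables avoiding the distinguished indices is zero
  have hprodconst : ∀ (m : Fin r) (s : Finset (Fin (n m))), c m ∉ s →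
      D (∏ j ∈ s, X (⟨m, j⟩ : Σ i : Fin r, Fin (n i)) ^ l m j) = 0 := by
    intro m s hs
    rw [Derivation.map_finset_prod]
    refine Finset.sum_eq_zero fun j hj => ?_
    rw [Derivation.leibniz_pow, hDX, if_neg (by rintro rfl; exact hs hj)]
    simp
  -- pderiv (T m) is a D-constant for m ≠ i₀
  have hconstpd : ∀ m : Fin r, m ≠ i₀ →
      D (pderiv (⟨m, c m⟩ : Σ i : Fin r, Fin (n i)) (T m)) = 0 := by
    intro m hm
    rw [hpdTm m, hC m hm]
    simp only [one_smul, Nat.sub_self, pow_zero, one_mul]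
    exact hprodconst m _ (Finset.notMem_erase _ _)
  -- D (T i) is the full product
  have hDT : ∀ i : Fin r, D (T i) =
      ∏ m : Fin r, pderiv (⟨m, c m⟩ : Σ i : Fin r, Fin (n i)) (T m) := by
    intro i
    have h1 : D (T i) = pderiv (⟨i, c i⟩ : Σ i : Fin r, Fin (n i)) (T i) *
        (Finset.univ.erase i).prod
          (fun m => pderiv (⟨m, c m⟩ : Σ i : Fin r, Fin (n i)) (T m)) := by
      conv_lhs => rw [hT i]
      conv_rhs => rw [hT i]
      rw [Derivation.map_finset_prod, Derivation.map_finset_prod, Finset.sum_mul]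
      refine Finset.sum_congr rfl fun j _ => ?_
      rcases eq_or_ne j (c i) with rfl | hj
      · rw [Derivation.leibniz_pow, Derivation.leibniz_pow, pderiv_X_self, hDX, if_pos rfl]
        simp only [smul_eq_mul, mul_one]
        ring
      · rw [Derivation.leibniz_pow, Derivation.leibniz_pow, hDX, if_neg hj,
          pderiv_X_of_ne (i := (⟨i, c i⟩ : Σ i : Fin r, Fin (n i)))
          (j := (⟨i, j⟩ : Σ i : Fin r, Fin (n i)))
          (fun h => hj (sigma_mk_injective (β := fun i : Fin r => Fin (n i)) h))]
        simp
    exact h1.trans (Finset.mul_prod_erase Finset.univ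
      (fun m => pderiv (⟨m, c m⟩ : Σ i : Fin r, Fin (n i)) (T m)) (Finset.mem_univ i))
  -- D maps I into I
  have hDI : ∀ x ∈ I, D x ∈ I := by
    intro x hx
    rw [hI] at hx ⊢
    refine Submodule.span_induction ?_ ?_ ?_ ?_ hx
    · rintro p ⟨i, h, rfl⟩
      rw [map_sub, map_sub, hDT, hDT, derivation_C, sub_zero, sub_self]
      exact Ideal.zero_mem _
    · rw [map_zero]; exact Ideal.zero_mem _
    · intro x y _ _ hx hy
      rw [map_add]; exact Ideal.add_mem _ hx hy
    · intro f x hxmem hx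
      rw [smul_eq_mul, D.leibniz, smul_eq_mul, smul_eq_mul]
      exact Ideal.add_mem _ (Ideal.mul_mem_left _ _ hx) (Ideal.mul_mem_right _ _ hxmem)
  -- the D-constant Q₀ := D (X ⟨i₀, c i₀⟩)
  have hDu : D (X (⟨i₀, c i₀⟩ : Σ i : Fin r, Fin (n i))) =
      (Finset.univ.erase i₀).prod
        (fun m => pderiv (⟨m, c m⟩ : Σ i : Fin r, Fin (n i)) (T m)) := by
    rw [hDX, if_pos rfl]
  have hDDu : D (D (X (⟨i₀, c i₀⟩ : Σ i : Fin r, Fin (n i)))) = 0 := by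
    rw [hDu, Derivation.map_finset_prod]
    refine Finset.sum_eq_zero fun m hm => ?_
    rw [hconstpd m (Finset.ne_of_mem_erase hm), zero_mul]
  -- key nilpotency lemma
  have key : ∀ (s : ℕ) (Q : MvPolynomial (Σ i : Fin r, Fin (n i)) k), D Q = 0 →
      ((D.toLinearMap : Module.End k (MvPolynomial (Σ i : Fin r, Fin (n i)) k)) ^ (s + 1))
        (Q * X (⟨i₀, c i₀⟩ : Σ i : Fin r, Fin (n i)) ^ s) = 0 := by
    intro s
    induction s with
    | zero =>
      intro Q hQ
      rw [pow_one, pow_zero, mul_one]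
      exact hQ
    | succ s ih =>
      intro Q hQ
      rw [pow_succ, Module.End.mul_apply]
      set u : MvPolynomial (Σ i : Fin r, Fin (n i)) k :=
        X (⟨i₀, c i₀⟩ : Σ i : Fin r, Fin (n i)) with hu
      have hlz : (D.toLinearMap : Module.End k (MvPolynomial (Σ i : Fin r, Fin (n i)) k))
          (Q * u ^ (s + 1)) = (((s + 1 : ℕ) : MvPolynomial (Σ i : Fin r, Fin (n i)) k) *
            (Q * D u)) * u ^ s := by
        show D (Q * u ^ (s + 1)) = _
        rw [D.leibniz, Derivation.leibniz_pow, hQ, Nat.add_sub_cancel]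
        simp only [smul_eq_mul, nsmul_eq_mul, mul_zero, add_zero, zero_mul]
        ring
      rw [hlz]
      refine ih _ ?_
      rw [D.leibniz, D.leibniz, hQ, hDDu, D.map_natCast]
      simp
  -- every variable is D-nilpotent
  have hXnil : ∀ v : (Σ i : Fin r, Fin (n i)), ∃ m : ℕ,
      ((D.toLinearMap : Module.End k (MvPolynomial (Σ i : Fin r, Fin (n i)) k)) ^ m) (X v)
        = 0 := by
    rintro ⟨i, j⟩
    by_cases hj : j = c i
    · subst hj
      by_cases hi : i = i₀
      · subst hi
        refine ⟨2, ?_⟩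
        rw [pow_succ, pow_one, Module.End.mul_apply]
        exact hDDu
      · -- i ≠ i₀
        set e := l i₀ (c i₀) with he
        have hmem : i₀ ∈ Finset.univ.erase i :=
          Finset.mem_erase.2 ⟨Ne.symm hi, Finset.mem_univ i₀⟩
        set W : MvPolynomial (Σ i : Fin r, Fin (n i)) k :=
          ∏ j ∈ Finset.univ.erase (c i₀), X (⟨i₀, j⟩ : Σ i : Fin r, Fin (n i)) ^ l i₀ j
          with hW
        set Rest : MvPolynomial (Σ i : Fin r, Fin (n i)) k :=
          ((Finset.univ.erase i).erase i₀).prod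
            (fun m => pderiv (⟨m, c m⟩ : Σ i : Fin r, Fin (n i)) (T m)) with hRest
        set Q : MvPolynomial (Σ i : Fin r, Fin (n i)) k :=
          ((e : ℕ) : MvPolynomial (Σ i : Fin r, Fin (n i)) k) * W * Rest with hQdef
        have hsplit : D (X (⟨i, c i⟩ : Σ i : Fin r, Fin (n i))) =
            Q * X (⟨i₀, c i₀⟩ : Σ i : Fin r, Fin (n i)) ^ (e - 1) := by
          rw [hDX, if_pos rfl, ← Finset.mul_prod_erase _ _ hmem, hpdTm i₀, ← he, ← hW,
            ← hRest, hQdef]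
          simp only [nsmul_eq_mul]
          ring
        have hQconst : D Q = 0 := by
          rw [hQdef, D.leibniz, D.leibniz, D.map_natCast,
            hprodconst i₀ _ (Finset.notMem_erase _ _)]
          have hRconst : D Rest = 0 := by
            rw [hRest, Derivation.map_finset_prod]
            refine Finset.sum_eq_zero fun m hm => ?_
            rw [hconstpd m (Finset.ne_of_mem_erase hm), zero_mul]
          rw [hRconst]
          simp
        refine ⟨e + 1, ?_⟩
        have h1 : ((D.toLinearMap : Module.End k (MvPolynomial (Σ i : Fin r, Fin (n i)) k))
            ^ (e + 1)) (X (⟨i, c i⟩ : Σ i : Fin r, Fin (n i))) =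
            ((D.toLinearMap : Module.End k (MvPolynomial (Σ i : Fin r, Fin (n i)) k)) ^ e)
              (D (X (⟨i, c i⟩ : Σ i : Fin r, Fin (n i)))) := by
          rw [pow_succ, Module.End.mul_apply]; rfl
        rw [h1, hsplit]
        have h2 := key (e - 1) Q hQconst
        rwa [show e - 1 + 1 = e from by have := hl i₀ (c i₀); omega] at h2
    · refine ⟨1, ?_⟩
      rw [pow_one]
      show D _ = 0
      rw [hDX, if_neg hj]
  -- D is locally nilpotent on the polynomial ring
  have hLND : ∀ p : MvPolynomial (Σ i : Fin r, Fin (n i)) k, ∃ m : ℕ,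
      ((D.toLinearMap : Module.End k (MvPolynomial (Σ i : Fin r, Fin (n i)) k)) ^ m) p
        = 0 := by
    intro p
    induction p using MvPolynomial.induction_on with
    | C q =>
      refine ⟨1, ?_⟩
      rw [pow_one]
      show D _ = 0
      exact derivation_C _ _
    | add p q hp hq =>
      obtain ⟨m1, hm1⟩ := hp
      obtain ⟨m2, hm2⟩ := hq
      refine ⟨max m1 m2, ?_⟩
      rw [map_add, D.pow_stable hm1 (le_max_left _ _), D.pow_stable hm2 (le_max_right _ _),
        add_zero]
    | mul_X p v hp =>
      obtain ⟨m1, hm1⟩ := hp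
      obtain ⟨m2, hm2⟩ := hXnil v
      exact ⟨m1 + m2, D.lnd_mul_aux (m1 + m2) m1 m2 p (X v) le_rfl hm1 hm2⟩
  -- construct the quotient derivation
  have hker : ∀ x : MvPolynomial (Σ i : Fin r, Fin (n i)) k,
      Ideal.Quotient.mkₐ k I x = 0 → Ideal.Quotient.mkₐ k I (D x) = 0 := by
    intro x hx
    rw [Ideal.Quotient.mkₐ_eq_mk, Ideal.Quotient.eq_zero_iff_mem] at hx ⊢
    exact hDI x hx
  refine ⟨Derivation.liftOfSurjective (f := Ideal.Quotient.mkₐ k I)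
    (Ideal.Quotient.mkₐ_surjective k I) hker, fun p => ?_, ?_⟩
  · have := Derivation.liftOfSurjective_apply (f := Ideal.Quotient.mkₐ k I)
      (Ideal.Quotient.mkₐ_surjective k I) hker p
    rwa [Ideal.Quotient.mkₐ_eq_mk] at this
  · set δ := Derivation.liftOfSurjective (f := Ideal.Quotient.mkₐ k I)
      (Ideal.Quotient.mkₐ_surjective k I) hker with hδ
    have hcomm : ∀ (N : ℕ) (p : MvPolynomial (Σ i : Fin r, Fin (n i)) k),
        ((δ.toLinearMap : Module.End k (MvPolynomial (Σ i : Fin r, Fin (n i)) k ⧸ I)) ^ N)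
          (Ideal.Quotient.mk I p) = Ideal.Quotient.mk I
            (((D.toLinearMap : Module.End k (MvPolynomial (Σ i : Fin r, Fin (n i)) k)) ^ N)
              p) := by
      intro N
      induction N with
      | zero => intro p; simp
      | succ N ih =>
        intro p
        rw [pow_succ, pow_succ, Module.End.mul_apply, Module.End.mul_apply]
        have h3 : (δ.toLinearMap) (Ideal.Quotient.mk I p) =
            Ideal.Quotient.mk I (D p) := by
          show δ (Ideal.Quotient.mk I p) = _
          have := Derivation.liftOfSurjective_apply (f := Ideal.Quotient.mkₐ k I)
            (Ideal.Quotient.mkₐ_surjective k I) hker p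
          rwa [Ideal.Quotient.mkₐ_eq_mk] at this
        rw [h3, ih]
        rfl
    intro g
    obtain ⟨p, rfl⟩ := Ideal.Quotient.mk_surjective g
    obtain ⟨m, hm⟩ := hLND p
    exact ⟨m, by rw [hcomm m p, hm, map_zero]⟩
end

section
/- Let k be an algebraically closed field of characteristic zero and R = k[x,y,z]/(x² + y² + z^γ) with γ ≥ 3 odd. Then there is no nonzero derivation δ of R that is homogeneous of some degree with respect to the grading deg x = deg y = γ, deg z = 2, locally nilpotent, and satisfies δ(z) = 0. -/
set_option synthInstance.maxHeartbeats 400000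
set_option maxHeartbeats 1000000

open MvPolynomial

section Aux

open Finset

lemma iterLeibniz {k A : Type*} [CommRing k] [CommRing A] [Algebra k A]
    (δ : Derivation k A A) (p q : A) (n : ℕ) :
    (⇑δ)^[n] (p * q) =
      ∑ j ∈ range n.succ, n.choose j • ((⇑δ)^[n - j] p * (⇑δ)^[j] q) := by
  have leib : ∀ a b : A, δ (a * b) = δ a * b + a * δ b := by
    intro a b; rw [Derivation.leibniz]; simp [smul_eq_mul]; ring
  induction n with
  | zero => simp [Finset.range]
  | succ n IH =>
    calc
      (⇑δ)^[n + 1] (p * q) =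
          δ (∑ j ∈ range n.succ, n.choose j • ((⇑δ)^[n - j] p * (⇑δ)^[j] q)) := by
        rw [Function.iterate_succ_apply', IH]
      _ = (∑ j ∈ range n.succ, n.choose j • ((⇑δ)^[n - j + 1] p * (⇑δ)^[j] q)) +
          ∑ j ∈ range n.succ, n.choose j • ((⇑δ)^[n - j] p * (⇑δ)^[j + 1] q) := by
        rw [map_sum]
        simp_rw [map_nsmul, leib, Function.iterate_succ_apply', smul_add, sum_add_distrib]
      _ = ((∑ j ∈ range n.succ, n.choose j.succ • ((⇑δ)^[n - j] p * (⇑δ)^[j + 1] q)) +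
          1 • ((⇑δ)^[n + 1] p * (⇑δ)^[0] q)) +
          ∑ j ∈ range n.succ, n.choose j • ((⇑δ)^[n - j] p * (⇑δ)^[j + 1] q) := ?_
      _ = ((∑ j ∈ range n.succ, n.choose j • ((⇑δ)^[n - j] p * (⇑δ)^[j + 1] q)) +
          ∑ j ∈ range n.succ, n.choose j.succ • ((⇑δ)^[n - j] p * (⇑δ)^[j + 1] q)) +
          1 • ((⇑δ)^[n + 1] p * (⇑δ)^[0] q) := by
        rw [add_comm, add_assoc]
      _ = (∑ i ∈ range n.succ,
            (n + 1).choose (i + 1) • ((⇑δ)^[n + 1 - (i + 1)] p * (⇑δ)^[i + 1] q)) +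
          1 • ((⇑δ)^[n + 1] p * (⇑δ)^[0] q) := by
        simp_rw [Nat.choose_succ_succ, Nat.succ_sub_succ, add_smul, sum_add_distrib]
      _ = ∑ j ∈ range n.succ.succ,
            n.succ.choose j • ((⇑δ)^[n.succ - j] p * (⇑δ)^[j] q) := by
        rw [sum_range_succ' _ n.succ, Nat.choose_zero_right, tsub_zero]
    congr
    refine (sum_range_succ' _ _).trans (congr_arg₂ (· + ·) ?_ ?_)
    · rw [sum_range_succ, Nat.choose_succ_self, zero_smul, add_zero]
      refine sum_congr rfl fun k hk => ?_
      rw [mem_range] at hk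
      congr
      omega
    · rw [Nat.choose_zero_right, tsub_zero]

lemma lnd_factor {k A : Type*} [CommRing k] [CommRing A] [IsDomain A] [CharZero A] [Algebra k A]
    (δ : Derivation k A A) (h : IsLND δ) {a b : A} (ha : a ≠ 0) (hb : b ≠ 0)
    (hab : δ (a * b) = 0) : δ a = 0 ∧ δ b = 0 := by
  classical
  have hiter : ∀ g : A, ∃ n : ℕ, (⇑δ)^[n] g = 0 := by
    intro g; obtain ⟨n, hn⟩ := h g
    exact ⟨n, by simpa [Module.End.pow_apply] using hn⟩
  have key : ∀ {u : A} {m n : ℕ}, (⇑δ)^[m] u = 0 → m ≤ n → (⇑δ)^[n] u = 0 := by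
    intro u m n hm hmn
    have : (⇑δ)^[n] u = (⇑δ)^[n - m] ((⇑δ)^[m] u) := by
      rw [← Function.iterate_add_apply]; congr 1; omega
    rw [this, hm]
    exact Function.iterate_fixed (map_zero δ) _
  have ha' : ∃ n : ℕ, (⇑δ)^[n] a = 0 := hiter a
  have hb' : ∃ n : ℕ, (⇑δ)^[n] b = 0 := hiter b
  set p := Nat.find ha' with hPdef
  set q := Nat.find hb' with hQdef
  have hpspec : (⇑δ)^[p] a = 0 := Nat.find_spec ha'
  have hqspec : (⇑δ)^[q] b = 0 := Nat.find_spec hb'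
  have hp1 : 1 ≤ p := by
    rcases Nat.eq_zero_or_pos p with h0 | h; · exact absurd (by simpa [h0] using hpspec) ha
    · exact h
  have hq1 : 1 ≤ q := by
    rcases Nat.eq_zero_or_pos q with h0 | h; · exact absurd (by simpa [h0] using hqspec) hb
    · exact h
  have hmain : p = 1 ∧ q = 1 := by
    by_contra hc
    have h3 : 3 ≤ p + q := by
      rcases Nat.lt_or_ge (p + q) 3 with h | h
      · exfalso; exact hc ⟨by omega, by omega⟩
      · exact h
    set n := p + q - 2 with hn
    have hzero : (⇑δ)^[n] (a * b) = 0 := by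
      have : (⇑δ)^[n] (a * b) = (⇑δ)^[n - 1] (δ (a * b)) := by
        have h1 : n = (n - 1) + 1 := by omega
        conv_lhs => rw [h1, Function.iterate_succ_apply]
      rw [this, hab]
      exact Function.iterate_fixed (map_zero δ) _
    rw [iterLeibniz] at hzero
    have hsingle : ∑ j ∈ range n.succ, n.choose j • ((⇑δ)^[n - j] a * (⇑δ)^[j] b)
        = n.choose (q-1) • ((⇑δ)^[n - (q-1)] a * (⇑δ)^[q-1] b) := by
      apply Finset.sum_eq_single
      · intro j hj hne
        rw [mem_range] at hj
        rcases Nat.lt_or_ge j (q-1) with hlt | hge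
        · have : (⇑δ)^[n - j] a = 0 := key hpspec (by omega)
          rw [this, zero_mul, smul_zero]
        · have : (⇑δ)^[j] b = 0 := key hqspec (by omega)
          rw [this, mul_zero, smul_zero]
      · intro hnot
        exact absurd (mem_range.mpr (by omega)) hnot
    rw [hsingle] at hzero
    have hne : (n.choose (q-1) : A) ≠ 0 := by
      rw [Nat.cast_ne_zero]
      exact (Nat.choose_pos (by omega)).ne'
    rw [nsmul_eq_mul, mul_eq_zero] at hzero
    rcases hzero with h0 | h0
    · exact hne h0
    rcases mul_eq_zero.mp h0 with h0 | h0
    · have hmin : (⇑δ)^[p-1] a ≠ 0 := Nat.find_min ha' (by omega)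
      have : n - (q - 1) = p - 1 := by omega
      rw [this] at h0; exact hmin h0
    · have hmin : (⇑δ)^[q-1] b ≠ 0 := Nat.find_min hb' (by omega)
      exact hmin h0
  constructor
  · have := key (u := a) (m := p) (n := 1) hpspec (by omega)
    simpa using this
  · have := key (u := b) (m := q) (n := 1) hqspec (by omega)
    simpa using this

lemma primeF {k : Type*} [Field k] [CharZero k] (γ : ℕ) (hγ : 3 ≤ γ) :
    Prime ((X 0 ^ 2 + X 1 ^ 2 + X 2 ^ γ) : MvPolynomial (Fin 3) k) := by
  have hγ0 : γ ≠ 0 := by omega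
  set c : MvPolynomial (Fin 2) k := X 0 ^ 2 + X 1 ^ γ with hc
  have hc0 : c ≠ 0 := by
    intro h
    have := congrArg (aeval ![(0:k), 1]) h
    simp [hc, zero_pow, hγ0] at this
  have hcu : ¬ IsUnit c := by
    intro h
    have h2 := h.map (aeval ![(0:k), 0])
    simp [hc, zero_pow, hγ0] at h2
  have hX0 : Prime (X 0 : MvPolynomial (Fin 2) k) := by
    rw [← MulEquiv.prime_iff (finSuccEquiv k 1).toMulEquiv]
    show Prime ((finSuccEquiv k 1) (X 0))
    rw [finSuccEquiv_X_zero]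
    exact Polynomial.prime_X
  have hX0ndvd : ¬ (X 0 : MvPolynomial (Fin 2) k) ∣ X 1 ^ γ := by
    intro hd
    obtain ⟨e, he⟩ := hX0.dvd_of_dvd_pow hd
    have := congrArg (aeval ![(0:k), 1]) he
    simp at this
  have sqfree : Squarefree c := by
    intro x hx
    by_contra hu
    have hx0 : x ≠ 0 := by rintro rfl; rw [zero_mul] at hx; exact hc0 (zero_dvd_iff.mp hx)
    obtain ⟨r, hirr, hrx⟩ := WfDvdMonoid.exists_irreducible_factor hu hx0
    have hr : Prime r := UniqueFactorizationMonoid.irreducible_iff_prime.mp hirr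
    have hr2 : r * r ∣ c := (mul_dvd_mul hrx hrx).trans hx
    have hrd : r ∣ (pderiv 0) c := by
      obtain ⟨d, hd⟩ := hr2
      rw [hd, mul_assoc, pderiv_mul]
      exact dvd_add ((dvd_mul_right r d).mul_left _) (dvd_mul_right _ _)
    have hpd : (pderiv 0) c = 2 * X 0 := by
      simp [hc, pderiv_pow, pderiv_X_of_ne (show (1:Fin 2) ≠ 0 by decide)]
    rw [hpd] at hrd
    have hrX0 : r ∣ (X 0 : MvPolynomial (Fin 2) k) := by
      rcases hr.dvd_mul.mp hrd with h2 | h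
      · exact absurd (isUnit_of_dvd_unit h2 (by
          rw [show ((2 : MvPolynomial (Fin 2) k)) = C 2 by simp [map_ofNat]]
          exact (isUnit_iff_ne_zero.mpr (two_ne_zero)).map C)) hr.not_unit
      · exact h
    have hrc : r ∣ c := hrx.trans ((dvd_mul_right x x).trans hx)
    have hX0c : (X 0 : MvPolynomial (Fin 2) k) ∣ c :=
      ((hr.irreducible.associated_of_dvd hX0.irreducible hrX0).symm.dvd).trans hrc
    exact hX0ndvd (by
      have hsq : (X 0 : MvPolynomial (Fin 2) k) ∣ X 0 ^ 2 := dvd_pow_self _ (by norm_num)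
      have h2 := dvd_sub hX0c hsq
      simpa [hc] using h2)
  obtain ⟨p, hirr, hpc⟩ := WfDvdMonoid.exists_irreducible_factor hcu hc0
  have hp : Prime p := UniqueFactorizationMonoid.irreducible_iff_prime.mp hirr
  have hp2 : ¬ (p * p ∣ c) := fun h => hp.not_unit (sqfree p h)
  set f : Polynomial (MvPolynomial (Fin 2) k) := Polynomial.X ^ 2 + Polynomial.C c with hf
  have hmonic : f.Monic := Polynomial.monic_X_pow_add_C c two_ne_zero
  have hdeg : f.natDegree = 2 := Polynomial.natDegree_X_pow_add_C
  have hEis : f.IsEisensteinAt (Ideal.span {p}) := by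
    constructor
    · rw [hmonic.leadingCoeff]
      intro h1
      exact hp.not_unit (isUnit_of_dvd_one (Ideal.mem_span_singleton.mp h1))
    · intro n hn
      rw [hdeg] at hn
      interval_cases n <;>
        simp [hf, Polynomial.coeff_X_pow, Ideal.mem_span_singleton, hpc]
    · rw [Ideal.span_singleton_pow, Ideal.mem_span_singleton]
      intro hd
      simp only [hf, Polynomial.coeff_add, Polynomial.coeff_X_pow, Polynomial.coeff_C] at hd
      norm_num at hd
      exact hp2 (by rwa [← pow_two])
  have hprime𝓟 : (Ideal.span {p}).IsPrime := (Ideal.span_singleton_prime hp.ne_zero).mpr hp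
  have hirrf : Irreducible f := hEis.irreducible hprime𝓟 hmonic.isPrimitive (by rw [hdeg]; norm_num)
  have heF : (finSuccEquiv k 2) ((X 0 ^ 2 + X 1 ^ 2 + X 2 ^ γ) : MvPolynomial (Fin 3) k) = f := by
    have e1 : (X 1 : MvPolynomial (Fin 3) k) = X (Fin.succ 0) := rfl
    have e2 : (X 2 : MvPolynomial (Fin 3) k) = X (Fin.succ 1) := rfl
    rw [map_add, map_add, map_pow, map_pow, map_pow, finSuccEquiv_X_zero, e1, e2,
      finSuccEquiv_X_succ, finSuccEquiv_X_succ, ← map_pow, ← map_pow]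
    rw [hf, hc, map_add, add_assoc]
  have hirrF : Irreducible ((X 0 ^ 2 + X 1 ^ 2 + X 2 ^ γ) : MvPolynomial (Fin 3) k) :=
    (MulEquiv.irreducible_iff (finSuccEquiv k 2)).mp (heF ▸ hirrf)
  exact UniqueFactorizationMonoid.irreducible_iff_prime.mp hirrF

end Aux

lemma main_aux {k : Type*} [Field k] [IsAlgClosed k] [CharZero k]
    (γ : ℕ) (hγ : 3 ≤ γ)
    (I : Ideal (MvPolynomial (Fin 3) k))
    (hI : I = Ideal.span {X 0 ^ 2 + X 1 ^ 2 + X 2 ^ γ})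
    (δ : Derivation k (MvPolynomial (Fin 3) k ⧸ I) (MvPolynomial (Fin 3) k ⧸ I))
    (hLND : IsLND δ) (hz : δ (Ideal.Quotient.mk I (X 2)) = 0) : δ = 0 := by
  have hγ0 : γ ≠ 0 := by omega
  have hFprime : Prime ((X 0 ^ 2 + X 1 ^ 2 + X 2 ^ γ) : MvPolynomial (Fin 3) k) := primeF γ hγ
  haveI hIP : I.IsPrime := by
    rw [hI]; exact (Ideal.span_singleton_prime hFprime.ne_zero).mpr hFprime
  haveI : IsDomain (MvPolynomial (Fin 3) k ⧸ I) := Ideal.Quotient.isDomain I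
  haveI : CharZero (MvPolynomial (Fin 3) k ⧸ I) :=
    charZero_of_injective_algebraMap (algebraMap k (MvPolynomial (Fin 3) k ⧸ I)).injective
  obtain ⟨i, hi⟩ := IsAlgClosed.exists_pow_nat_eq (-1 : k) (n := 2) (by norm_num)
  have hi0 : i ≠ 0 := by
    rintro rfl
    rw [zero_pow (by norm_num : (2:ℕ) ≠ 0)] at hi
    exact one_ne_zero (neg_eq_zero.mp hi.symm)
  have keymem : ∀ (v : Fin 3 → k), aeval v ((X 0 ^ 2 + X 1 ^ 2 + X 2 ^ γ) : MvPolynomial (Fin 3) k) = 0 →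
      ∀ p : MvPolynomial (Fin 3) k, Ideal.Quotient.mk I p = 0 → aeval v p = 0 := by
    intro v hv p hp
    rw [Ideal.Quotient.eq_zero_iff_mem, hI, Ideal.mem_span_singleton] at hp
    obtain ⟨e, he⟩ := hp
    rw [he, map_mul, hv, zero_mul]
  have ha : Ideal.Quotient.mk I (X 0 + C i * X 1) ≠ 0 := by
    intro h0
    have hv : aeval ![i, 1, 0] ((X 0 ^ 2 + X 1 ^ 2 + X 2 ^ γ) : MvPolynomial (Fin 3) k) = 0 := by
      simp [zero_pow hγ0, hi]
    have h1 := keymem ![i, 1, 0] hv _ h0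
    simp at h1
    exact hi0 h1
  have hb : Ideal.Quotient.mk I (X 0 - C i * X 1) ≠ 0 := by
    intro h0
    have hv : aeval ![-i, 1, 0] ((X 0 ^ 2 + X 1 ^ 2 + X 2 ^ γ) : MvPolynomial (Fin 3) k) = 0 := by
      simp [zero_pow hγ0, hi]
    have h1 := keymem ![-i, 1, 0] hv _ h0
    simp at h1
    exact hi0 (by linear_combination (-1/2 : k) * h1)
  have hCi : (C i : MvPolynomial (Fin 3) k) ^ 2 = -1 := by
    rw [← map_pow, hi, map_neg, map_one]
  have hpoly : (X 0 + C i * X 1) * (X 0 - C i * X 1)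
      = -(X 2 ^ γ) + ((X 0 ^ 2 + X 1 ^ 2 + X 2 ^ γ) : MvPolynomial (Fin 3) k) := by
    linear_combination (-(X 1 : MvPolynomial (Fin 3) k) ^ 2) * hCi
  have hmkF : Ideal.Quotient.mk I ((X 0 ^ 2 + X 1 ^ 2 + X 2 ^ γ) : MvPolynomial (Fin 3) k) = 0 := by
    rw [Ideal.Quotient.eq_zero_iff_mem, hI]
    exact Ideal.subset_span rfl
  have hprod : Ideal.Quotient.mk I (X 0 + C i * X 1) * Ideal.Quotient.mk I (X 0 - C i * X 1)
      = -(Ideal.Quotient.mk I (X 2)) ^ γ := by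
    rw [← map_mul, hpoly, map_add, hmkF, add_zero, map_neg, map_pow]
  have hδab : δ (Ideal.Quotient.mk I (X 0 + C i * X 1) * Ideal.Quotient.mk I (X 0 - C i * X 1)) = 0 := by
    rw [hprod, map_neg, Derivation.leibniz_pow, hz, smul_zero, smul_zero, neg_zero]
  obtain ⟨hda, hdb⟩ := lnd_factor δ hLND ha hb hδab
  have hx : δ (Ideal.Quotient.mk I (X 0)) = 0 := by
    have h2 : δ (Ideal.Quotient.mk I (X 0 + C i * X 1) + Ideal.Quotient.mk I (X 0 - C i * X 1)) = 0 := by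
      rw [map_add, hda, hdb, add_zero]
    have h3 : Ideal.Quotient.mk I (X 0 + C i * X 1) + Ideal.Quotient.mk I (X 0 - C i * X 1)
        = 2 * Ideal.Quotient.mk I (X 0) := by
      rw [← map_add, show (X 0 + C i * X 1) + (X 0 - C i * X 1)
        = 2 * (X 0 : MvPolynomial (Fin 3) k) from by ring, map_mul, map_ofNat]
    rw [h3] at h2
    have h4 : δ (2 * Ideal.Quotient.mk I (X 0)) = 2 * δ (Ideal.Quotient.mk I (X 0)) := by
      rw [two_mul, map_add, two_mul]
    rw [h4, mul_eq_zero] at h2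
    rcases h2 with h | h
    · exact absurd h two_ne_zero
    · exact h
  have hy : δ (Ideal.Quotient.mk I (X 1)) = 0 := by
    have h2 : δ (Ideal.Quotient.mk I (X 0 + C i * X 1) - Ideal.Quotient.mk I (X 0 - C i * X 1)) = 0 := by
      rw [map_sub, hda, hdb, sub_zero]
    have h3 : Ideal.Quotient.mk I (X 0 + C i * X 1) - Ideal.Quotient.mk I (X 0 - C i * X 1)
        = algebraMap k (MvPolynomial (Fin 3) k ⧸ I) (2 * i) * Ideal.Quotient.mk I (X 1) := by
      rw [← map_sub, show (X 0 + C i * X 1) - (X 0 - C i * X 1)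
        = C (2 * i) * (X 1 : MvPolynomial (Fin 3) k) from by
          rw [map_mul, show (C (2:k) : MvPolynomial (Fin 3) k) = 2 from by simp [map_ofNat]]
          ring, map_mul, ← MvPolynomial.algebraMap_eq, Ideal.Quotient.mk_algebraMap]
    have h4 : δ (algebraMap k (MvPolynomial (Fin 3) k ⧸ I) (2 * i) * Ideal.Quotient.mk I (X 1))
        = algebraMap k (MvPolynomial (Fin 3) k ⧸ I) (2 * i) * δ (Ideal.Quotient.mk I (X 1)) := by
      rw [Derivation.leibniz, Derivation.map_algebraMap, smul_zero, add_zero, smul_eq_mul]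
    rw [h3, h4, mul_eq_zero] at h2
    rcases h2 with h | h
    · exfalso
      have h5 := (algebraMap k (MvPolynomial (Fin 3) k ⧸ I)).injective
        (h.trans (map_zero (algebraMap k (MvPolynomial (Fin 3) k ⧸ I))).symm)
      rcases mul_eq_zero.mp h5 with h6 | h6
      · exact two_ne_zero h6
      · exact hi0 h6
    · exact h
  ext r
  obtain ⟨p, rfl⟩ := Ideal.Quotient.mk_surjective r
  show δ (Ideal.Quotient.mk I p) = 0
  induction p using MvPolynomial.induction_on with
  | C c =>
    rw [← MvPolynomial.algebraMap_eq, Ideal.Quotient.mk_algebraMap]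
    exact Derivation.map_algebraMap δ c
  | add p q hp hq =>
    rw [map_add, map_add, hp, hq, add_zero]
  | mul_X p n hp =>
    rw [map_mul, Derivation.leibniz, hp, smul_zero, add_zero]
    have hn : δ (Ideal.Quotient.mk I (X n)) = 0 := by
      fin_cases n
      · exact hx
      · exact hy
      · exact hz
    rw [hn, smul_zero]

/-- On `R = k[x,y,z]/(x² + y² + z^γ)` with `γ ≥ 3` odd, there is no nonzero locally
nilpotent derivation of `R` which is homogeneous of some degree with respect to the
grading `deg x = deg y = γ`, `deg z = 2` and which kills `z`: homogeneity means that
the image of every weighted-homogeneous polynomial of degree `n` is zero or the class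
of a weighted-homogeneous polynomial of degree `n + d`. -/
theorem stmt18 {k : Type*} [Field k] [IsAlgClosed k] [CharZero k]
    (γ : ℕ) (hγ : 3 ≤ γ) (hodd : Odd γ)
    (I : Ideal (MvPolynomial (Fin 3) k))
    (hI : I = Ideal.span {X 0 ^ 2 + X 1 ^ 2 + X 2 ^ γ}) :
    ¬ ∃ (δ : Derivation k (MvPolynomial (Fin 3) k ⧸ I) (MvPolynomial (Fin 3) k ⧸ I))
        (d : ℤ),
      δ ≠ 0 ∧ IsLND δ ∧ δ (Ideal.Quotient.mk I (X 2)) = 0 ∧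
      (∀ (n : ℕ) (p : MvPolynomial (Fin 3) k), p.IsWeightedHomogeneous ![γ, γ, 2] n →
        δ (Ideal.Quotient.mk I p) = 0 ∨
        ∃ q : MvPolynomial (Fin 3) k, (∃ m : ℕ, (m : ℤ) = (n : ℤ) + d ∧
            q.IsWeightedHomogeneous ![γ, γ, 2] m) ∧
          δ (Ideal.Quotient.mk I p) = Ideal.Quotient.mk I q) := by
  rintro ⟨δ, d, hδne, hLND, hz, -⟩
  exact hδne (main_aux γ hγ I hI δ hLND hz)
end
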